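/- Consider the building thermal dynamics with constant control inputs q_i ≥ 0 and T_s (GHP system on) and constant outdoor temperature T^o and heat gains Q_i. Then the system has a unique equilibrium point, uniquely determined by the disturbances T^o, Q_i and the control inputs q_i, T_s, and every solution (T_i, T_{fi}, T_{wi})_{i∈N} converges asymptotically to this equilibrium. -/

import Mathlib

open Finset Filter Topology

section Aux

lemma perZone (r a c k x f w : ℝ) (hr : 0 < r) (ha : 0 < a) (hc : 0 < c) (hk : 0 ≤ k) :
    x * (-(x / r) + (f - x) / a) + f * ((x - f) / a + (w - f) / c)
      + (1 / (1 + k * c)) * (w * ((f - w) / c - k * f))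
    ≤ -(min (1 / (7 * r)) (min (1 / (6 * a)) ((1 / (1 + k * c)) / (2 * c)))) * (x ^ 2 + f ^ 2 + w ^ 2) := by
  have hkc : 0 < 1 + k * c := by positivity
  have key : x * (-(x / r) + (f - x) / a) + f * ((x - f) / a + (w - f) / c)
      + (1 / (1 + k * c)) * (w * ((f - w) / c - k * f))
      = -(x ^ 2 / r) - (x - f) ^ 2 / a
        - ((1 - 1 / (1 + k * c)) * f ^ 2 + (1 / (1 + k * c)) * (f - w) ^ 2) / c := by
    field_simp
    ring
  rw [key]
  set l : ℝ := 1 / (1 + k * c) with hl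
  have hl0 : 0 < l := by positivity
  have hl1 : l ≤ 1 := by rw [hl, div_le_one hkc]; nlinarith
  set e : ℝ := min (1 / (7 * r)) (min (1 / (6 * a)) (l / (2 * c))) with he
  have he1 : 7 * e ≤ 1 / r := by
    have := min_le_left (1 / (7 * r)) (min (1 / (6 * a)) (l / (2 * c)))
    calc 7 * e ≤ 7 * (1 / (7 * r)) := by linarith
      _ = 1 / r := by field_simp
  have he2 : 6 * e ≤ 1 / a := by
    have := le_trans (min_le_right (1 / (7 * r)) _) (min_le_left (1 / (6 * a)) (l / (2 * c)))
    calc 6 * e ≤ 6 * (1 / (6 * a)) := by linarith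
      _ = 1 / a := by field_simp
  have he3 : 2 * e ≤ l / c := by
    have := le_trans (min_le_right (1 / (7 * r)) _) (min_le_right (1 / (6 * a)) (l / (2 * c)))
    calc 2 * e ≤ 2 * (l / (2 * c)) := by linarith
      _ = l / c := by field_simp
  have he0 : 0 < e := by
    apply lt_min (by positivity) (lt_min (by positivity) (by positivity))
  have h1 : 7 * e * x ^ 2 ≤ x ^ 2 / r := by
    have := mul_le_mul_of_nonneg_right he1 (sq_nonneg x)
    calc 7 * e * x ^ 2 ≤ (1 / r) * x ^ 2 := this
      _ = x ^ 2 / r := by ring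
  have h2 : 6 * e * (x - f) ^ 2 ≤ (x - f) ^ 2 / a := by
    have := mul_le_mul_of_nonneg_right he2 (sq_nonneg (x - f))
    calc 6 * e * (x - f) ^ 2 ≤ (1 / a) * (x - f) ^ 2 := this
      _ = (x - f) ^ 2 / a := by ring
  have h3 : 2 * e * (f - w) ^ 2 ≤ l * (f - w) ^ 2 / c := by
    have := mul_le_mul_of_nonneg_right he3 (sq_nonneg (f - w))
    calc 2 * e * (f - w) ^ 2 ≤ (l / c) * (f - w) ^ 2 := this
      _ = l * (f - w) ^ 2 / c := by ring
  have hf2 : 0 ≤ (1 - l) * f ^ 2 / c := by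
    apply div_nonneg (mul_nonneg (by linarith) (sq_nonneg f)) hc.le
  have hsum : x ^ 2 + f ^ 2 + w ^ 2 ≤ 7 * x ^ 2 + 6 * (x - f) ^ 2 + 2 * (f - w) ^ 2 := by
    nlinarith [sq_nonneg (2 * x - f), sq_nonneg (2 * f - w)]
  have hmain : e * (x ^ 2 + f ^ 2 + w ^ 2) ≤ x ^ 2 / r + (x - f) ^ 2 / a + l * (f - w) ^ 2 / c := by
    calc e * (x ^ 2 + f ^ 2 + w ^ 2) ≤ e * (7 * x ^ 2 + 6 * (x - f) ^ 2 + 2 * (f - w) ^ 2) :=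
          mul_le_mul_of_nonneg_left hsum he0.le
      _ = 7 * e * x ^ 2 + 6 * e * (x - f) ^ 2 + 2 * e * (f - w) ^ 2 := by ring
      _ ≤ _ := by linarith
  have expand : ((1 - l) * f ^ 2 + l * (f - w) ^ 2) / c
      = (1 - l) * f ^ 2 / c + l * (f - w) ^ 2 / c := by ring
  rw [expand]
  linarith

lemma graph_nonpos {n : ℕ} (G : SimpleGraph (Fin n)) [DecidableRel G.Adj]
    (R : Fin n → Fin n → ℝ) (hR : ∀ i j, G.Adj i j → 0 < R i j)
    (hsym : ∀ i j, R i j = R j i) (x : Fin n → ℝ) :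
    ∑ i, ∑ j ∈ G.neighborFinset i, x i * ((x j - x i) / R i j) ≤ 0 := by
  have hrw : ∀ (g : Fin n → Fin n → ℝ),
      ∑ i, ∑ j ∈ G.neighborFinset i, g i j
        = ∑ i, ∑ j, if G.Adj i j then g i j else 0 := by
    intro g
    refine Finset.sum_congr rfl fun i _ => ?_
    rw [SimpleGraph.neighborFinset_eq_filter, Finset.sum_filter]
  set S := ∑ i, ∑ j ∈ G.neighborFinset i, x i * ((x j - x i) / R i j) with hS
  have h2 : 2 * S = ∑ i, ∑ j, if G.Adj i j then
      x i * ((x j - x i) / R i j) + x j * ((x i - x j) / R i j) else 0 := by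
    rw [hS, hrw]
    have hswap : (∑ i, ∑ j, if G.Adj i j then x i * ((x j - x i) / R i j) else 0)
        = ∑ i, ∑ j, if G.Adj i j then x j * ((x i - x j) / R i j) else 0 := by
      rw [Finset.sum_comm]
      refine Finset.sum_congr rfl fun i _ => Finset.sum_congr rfl fun j _ => ?_
      rw [hsym j i]
      exact if_congr (G.adj_comm j i) rfl rfl
    rw [two_mul]
    nth_rewrite 2 [hswap]
    rw [← Finset.sum_add_distrib]
    refine Finset.sum_congr rfl fun i _ => ?_
    rw [← Finset.sum_add_distrib]
    refine Finset.sum_congr rfl fun j _ => ?_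
    split <;> ring
  have h3 : 2 * S ≤ 0 := by
    rw [h2]
    apply Finset.sum_nonpos
    intro i _
    apply Finset.sum_nonpos
    intro j _
    split
    · rename_i hadj
      have hRp := hR i j hadj
      have heq : x i * ((x j - x i) / R i j) + x j * ((x i - x j) / R i j)
          = -((x i - x j) ^ 2 / R i j) := by ring
      rw [heq]
      exact neg_nonpos.mpr (by positivity)
    · exact le_refl 0
  linarith

lemma gronwall_tendsto_zero (V V' : ℝ → ℝ) (ρ : ℝ) (hρ : 0 < ρ)
    (hV0 : ∀ t, 0 ≤ V t) (hd : ∀ t, HasDerivAt V (V' t) t)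
    (hle : ∀ t, V' t ≤ -ρ * V t) :
    Tendsto V atTop (𝓝 0) := by
  set W : ℝ → ℝ := fun t => V t * Real.exp (ρ * t) with hW
  have hdW : ∀ t, HasDerivAt W ((V' t + ρ * V t) * Real.exp (ρ * t)) t := by
    intro t
    have h1 : HasDerivAt (fun s => Real.exp (ρ * s)) (Real.exp (ρ * t) * ρ) t :=
      (Real.hasDerivAt_exp (ρ * t)).comp t ((hasDerivAt_id t).const_mul ρ) |>.congr_deriv (by ring)
    exact ((hd t).mul h1).congr_deriv (by ring)
  have hanti : Antitone W := by
    apply antitone_of_deriv_nonpos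
    · intro t; exact (hdW t).differentiableAt
    · intro t
      rw [(hdW t).deriv]
      have h1 : V' t + ρ * V t ≤ 0 := by have := hle t; linarith
      exact mul_nonpos_of_nonpos_of_nonneg h1 (Real.exp_pos _).le
  have hbound : ∀ t, 0 ≤ t → V t ≤ V 0 * Real.exp (-(ρ * t)) := by
    intro t ht
    have h2 : V t * Real.exp (ρ * t) ≤ V 0 * Real.exp (ρ * 0) := hanti ht
    rw [mul_zero, Real.exp_zero, mul_one] at h2
    rw [Real.exp_neg]
    rw [← le_div_iff₀ (Real.exp_pos _)] at h2
    calc V t ≤ V 0 / Real.exp (ρ * t) := h2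
      _ = V 0 * (Real.exp (ρ * t))⁻¹ := by ring
  have hlim : Tendsto (fun t => V 0 * Real.exp (-(ρ * t))) atTop (𝓝 0) := by
    have h1 : Tendsto (fun t : ℝ => ρ * t) atTop atTop :=
      Tendsto.const_mul_atTop hρ tendsto_id
    have h2 : Tendsto (fun t : ℝ => Real.exp (-(ρ * t))) atTop (𝓝 0) :=
      Real.tendsto_exp_neg_atTop_nhds_zero.comp h1
    simpa using h2.const_mul (V 0)
  apply tendsto_of_tendsto_of_tendsto_of_le_of_le' tendsto_const_nhds hlim
  · exact Eventually.of_forall hV0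
  · filter_upwards [eventually_ge_atTop (0:ℝ)] with t ht using hbound t ht

noncomputable def epsz {n : ℕ} (Ri Raf Rfw kk : Fin n → ℝ) (i : Fin n) : ℝ :=
  min (1 / (7 * Ri i)) (min (1 / (6 * Raf i)) ((1 / (1 + kk i * Rfw i)) / (2 * Rfw i)))

noncomputable def lamz {n : ℕ} (Rfw kk : Fin n → ℝ) (i : Fin n) : ℝ := 1 / (1 + kk i * Rfw i)

lemma epsz_pos {n : ℕ} (Ri Raf Rfw kk : Fin n → ℝ) (hRi : ∀ i, 0 < Ri i)
    (hRaf : ∀ i, 0 < Raf i) (hRfw : ∀ i, 0 < Rfw i) (hk : ∀ i, 0 ≤ kk i) (i : Fin n) :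
    0 < epsz Ri Raf Rfw kk i := by
  have h1 := hRi i; have h2 := hRaf i; have h3 := hRfw i; have h4 := hk i
  have h5 : (0:ℝ) < 1 + kk i * Rfw i := by positivity
  unfold epsz
  exact lt_min (by positivity) (lt_min (by positivity) (by positivity))

lemma lamz_pos {n : ℕ} (Rfw kk : Fin n → ℝ) (hRfw : ∀ i, 0 < Rfw i) (hk : ∀ i, 0 ≤ kk i)
    (i : Fin n) : 0 < lamz Rfw kk i := by
  have h3 := hRfw i; have h4 := hk i
  have h5 : (0:ℝ) < 1 + kk i * Rfw i := by positivity
  unfold lamz; positivity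

noncomputable def Lmap (n : ℕ) (G : SimpleGraph (Fin n)) [DecidableRel G.Adj]
    (Ri Raf Rfw : Fin n → ℝ) (Rij : Fin n → Fin n → ℝ) (kk : Fin n → ℝ) :
    ((Fin n → ℝ) × (Fin n → ℝ) × (Fin n → ℝ)) →ₗ[ℝ] ((Fin n → ℝ) × (Fin n → ℝ) × (Fin n → ℝ)) where
  toFun s :=
    (fun i => -(s.1 i / Ri i) + (∑ j ∈ G.neighborFinset i, (s.1 j - s.1 i) / Rij i j)
        + (s.2.1 i - s.1 i) / Raf i,
     fun i => (s.1 i - s.2.1 i) / Raf i + (s.2.2 i - s.2.1 i) / Rfw i,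
     fun i => (s.2.1 i - s.2.2 i) / Rfw i - kk i * s.2.1 i)
  map_add' s t := by
    refine Prod.ext ?_ (Prod.ext ?_ ?_) <;> funext i <;>
      simp only [Prod.fst_add, Prod.snd_add, Pi.add_apply]
    · rw [show (∑ j ∈ G.neighborFinset i, ((s.1 j + t.1 j) - (s.1 i + t.1 i)) / Rij i j)
          = (∑ j ∈ G.neighborFinset i, ((s.1 j - s.1 i) / Rij i j + (t.1 j - t.1 i) / Rij i j))
        from Finset.sum_congr rfl fun j _ => by ring, Finset.sum_add_distrib]
      ring
    · ring
    · ring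
  map_smul' a s := by
    refine Prod.ext ?_ (Prod.ext ?_ ?_) <;> funext i <;>
      simp only [Prod.smul_fst, Prod.smul_snd, Pi.smul_apply, smul_eq_mul, RingHom.id_apply]
    · rw [show (∑ j ∈ G.neighborFinset i, (a * s.1 j - a * s.1 i) / Rij i j)
          = (∑ j ∈ G.neighborFinset i, a * ((s.1 j - s.1 i) / Rij i j))
        from Finset.sum_congr rfl fun j _ => by ring, ← Finset.mul_sum]
      ring
    · ring
    · ring

lemma Lmap_apply {n : ℕ} (G : SimpleGraph (Fin n)) [DecidableRel G.Adj]
    (Ri Raf Rfw : Fin n → ℝ) (Rij : Fin n → Fin n → ℝ) (kk : Fin n → ℝ)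
    (x f w : Fin n → ℝ) :
    Lmap n G Ri Raf Rfw Rij kk (x, f, w) =
      (fun i => -(x i / Ri i) + (∑ j ∈ G.neighborFinset i, (x j - x i) / Rij i j)
          + (f i - x i) / Raf i,
       fun i => (x i - f i) / Raf i + (w i - f i) / Rfw i,
       fun i => (f i - w i) / Rfw i - kk i * f i) := rfl

lemma keyIneq {n : ℕ} (G : SimpleGraph (Fin n)) [DecidableRel G.Adj]
    (Ri Raf Rfw : Fin n → ℝ) (Rij : Fin n → Fin n → ℝ) (kk : Fin n → ℝ)
    (hRi : ∀ i, 0 < Ri i) (hRaf : ∀ i, 0 < Raf i) (hRfw : ∀ i, 0 < Rfw i)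
    (hRij : ∀ i j, G.Adj i j → 0 < Rij i j) (hRsym : ∀ i j, Rij i j = Rij j i)
    (hk : ∀ i, 0 ≤ kk i) (x f w : Fin n → ℝ) :
    ∑ i, (x i * (-(x i / Ri i) + (∑ j ∈ G.neighborFinset i, (x j - x i) / Rij i j)
          + (f i - x i) / Raf i)
        + f i * ((x i - f i) / Raf i + (w i - f i) / Rfw i)
        + lamz Rfw kk i * (w i * ((f i - w i) / Rfw i - kk i * f i)))
    ≤ ∑ i, -(epsz Ri Raf Rfw kk i) * (x i ^ 2 + f i ^ 2 + w i ^ 2) := by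
  have split : ∑ i, (x i * (-(x i / Ri i) + (∑ j ∈ G.neighborFinset i, (x j - x i) / Rij i j)
          + (f i - x i) / Raf i)
        + f i * ((x i - f i) / Raf i + (w i - f i) / Rfw i)
        + lamz Rfw kk i * (w i * ((f i - w i) / Rfw i - kk i * f i)))
      = (∑ i, ∑ j ∈ G.neighborFinset i, x i * ((x j - x i) / Rij i j))
        + ∑ i, (x i * (-(x i / Ri i) + (f i - x i) / Raf i)
            + f i * ((x i - f i) / Raf i + (w i - f i) / Rfw i)
            + (1 / (1 + kk i * Rfw i)) * (w i * ((f i - w i) / Rfw i - kk i * f i))) := by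
    rw [← Finset.sum_add_distrib]
    refine Finset.sum_congr rfl fun i _ => ?_
    rw [← Finset.mul_sum, lamz]
    ring
  rw [split]
  have h1 := graph_nonpos G Rij hRij hRsym x
  have h2 : ∑ i, (x i * (-(x i / Ri i) + (f i - x i) / Raf i)
        + f i * ((x i - f i) / Raf i + (w i - f i) / Rfw i)
        + (1 / (1 + kk i * Rfw i)) * (w i * ((f i - w i) / Rfw i - kk i * f i)))
      ≤ ∑ i, -(epsz Ri Raf Rfw kk i) * (x i ^ 2 + f i ^ 2 + w i ^ 2) := by
    refine Finset.sum_le_sum fun i _ => ?_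
    have := perZone (Ri i) (Raf i) (Rfw i) (kk i) (x i) (f i) (w i)
      (hRi i) (hRaf i) (hRfw i) (hk i)
    rw [epsz]
    linarith
  linarith

lemma Lmap_inj {n : ℕ} (G : SimpleGraph (Fin n)) [DecidableRel G.Adj]
    (Ri Raf Rfw : Fin n → ℝ) (Rij : Fin n → Fin n → ℝ) (kk : Fin n → ℝ)
    (hRi : ∀ i, 0 < Ri i) (hRaf : ∀ i, 0 < Raf i) (hRfw : ∀ i, 0 < Rfw i)
    (hRij : ∀ i j, G.Adj i j → 0 < Rij i j) (hRsym : ∀ i j, Rij i j = Rij j i)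
    (hk : ∀ i, 0 ≤ kk i) :
    Function.Injective (Lmap n G Ri Raf Rfw Rij kk) := by
  refine (injective_iff_map_eq_zero _).mpr fun s hs => ?_
  have h1 : ∀ i, -(s.1 i / Ri i) + (∑ j ∈ G.neighborFinset i, (s.1 j - s.1 i) / Rij i j)
      + (s.2.1 i - s.1 i) / Raf i = 0 := fun i => congrFun (congrArg Prod.fst hs) i
  have h2 : ∀ i, (s.1 i - s.2.1 i) / Raf i + (s.2.2 i - s.2.1 i) / Rfw i = 0 :=
    fun i => congrFun (congrArg (fun p => p.2.1) hs) i
  have h3 : ∀ i, (s.2.1 i - s.2.2 i) / Rfw i - kk i * s.2.1 i = 0 :=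
    fun i => congrFun (congrArg (fun p => p.2.2) hs) i
  have hD : ∑ i, (s.1 i * (-(s.1 i / Ri i) + (∑ j ∈ G.neighborFinset i, (s.1 j - s.1 i) / Rij i j)
          + (s.2.1 i - s.1 i) / Raf i)
        + s.2.1 i * ((s.1 i - s.2.1 i) / Raf i + (s.2.2 i - s.2.1 i) / Rfw i)
        + lamz Rfw kk i * (s.2.2 i * ((s.2.1 i - s.2.2 i) / Rfw i - kk i * s.2.1 i))) = 0 := by
    refine Finset.sum_eq_zero fun i _ => ?_
    rw [h1 i, h2 i, h3 i]
    ring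
  have hK := keyIneq G Ri Raf Rfw Rij kk hRi hRaf hRfw hRij hRsym hk s.1 s.2.1 s.2.2
  rw [hD] at hK
  have hnn : ∀ i ∈ Finset.univ (α := Fin n),
      0 ≤ epsz Ri Raf Rfw kk i * (s.1 i ^ 2 + s.2.1 i ^ 2 + s.2.2 i ^ 2) := fun i _ => by
    have := epsz_pos Ri Raf Rfw kk hRi hRaf hRfw hk i
    positivity
  have hzero : ∀ i ∈ Finset.univ (α := Fin n),
      epsz Ri Raf Rfw kk i * (s.1 i ^ 2 + s.2.1 i ^ 2 + s.2.2 i ^ 2) = 0 := by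
    have hsum : ∑ i, epsz Ri Raf Rfw kk i * (s.1 i ^ 2 + s.2.1 i ^ 2 + s.2.2 i ^ 2) ≤ 0 := by
      have hre : ∑ i, -(epsz Ri Raf Rfw kk i) * (s.1 i ^ 2 + s.2.1 i ^ 2 + s.2.2 i ^ 2)
          = -∑ i, epsz Ri Raf Rfw kk i * (s.1 i ^ 2 + s.2.1 i ^ 2 + s.2.2 i ^ 2) := by
        rw [← Finset.sum_neg_distrib]
        exact Finset.sum_congr rfl fun i _ => by ring
      rw [hre] at hK
      linarith
    exact (Finset.sum_eq_zero_iff_of_nonneg hnn).mp (le_antisymm hsum (Finset.sum_nonneg hnn))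
  have hco : ∀ i, s.1 i = 0 ∧ s.2.1 i = 0 ∧ s.2.2 i = 0 := by
    intro i
    have h := hzero i (Finset.mem_univ i)
    have he := epsz_pos Ri Raf Rfw kk hRi hRaf hRfw hk i
    have hsq : s.1 i ^ 2 + s.2.1 i ^ 2 + s.2.2 i ^ 2 = 0 := by
      rcases mul_eq_zero.mp h with h' | h'
      · exact absurd h' he.ne'
      · exact h'
    refine ⟨sq_eq_zero_iff.mp ?_, sq_eq_zero_iff.mp ?_, sq_eq_zero_iff.mp ?_⟩ <;>
      nlinarith [sq_nonneg (s.1 i), sq_nonneg (s.2.1 i), sq_nonneg (s.2.2 i)]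
  exact Prod.ext (funext fun i => (hco i).1)
    (Prod.ext (funext fun i => (hco i).2.1) (funext fun i => (hco i).2.2))

end Aux

noncomputable def ρconv (n : ℕ) (C Cf Cw Ri Raf Rfw kk : Fin n → ℝ) [Nonempty (Fin n)] : ℝ :=
  Finset.univ.inf' Finset.univ_nonempty (fun i =>
    min (2 * epsz Ri Raf Rfw kk i / C i)
      (min (2 * epsz Ri Raf Rfw kk i / Cf i)
        (2 * epsz Ri Raf Rfw kk i / (lamz Rfw kk i * Cw i))))
set_option maxHeartbeats 1000000 in
/-- With the GHP system on (constant flow rates `qᵢ ≥ 0` and supply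
temperature `Ts`) and constant outdoor temperature `To` and heat gains `Qᵢ`, the building
thermal dynamics has a unique equilibrium point (determined by `To`, `Qᵢ`, `qᵢ`, `Ts`), and
every solution `(Tᵢ, T_{fi}, T_{wi})` converges asymptotically to this equilibrium. -/
theorem stmt_1
    (n : ℕ) (hn : 0 < n)
    (G : SimpleGraph (Fin n)) [DecidableRel G.Adj] (hG : G.Connected)
    (C Cf Cw Ri Raf Rfw : Fin n → ℝ) (Rij : Fin n → Fin n → ℝ)
    (hC : ∀ i, 0 < C i) (hCf : ∀ i, 0 < Cf i) (hCw : ∀ i, 0 < Cw i)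
    (hRi : ∀ i, 0 < Ri i) (hRaf : ∀ i, 0 < Raf i) (hRfw : ∀ i, 0 < Rfw i)
    (hRij : ∀ i j, G.Adj i j → 0 < Rij i j)
    (hRsym : ∀ i j, Rij i j = Rij j i)
    (cw : ℝ) (hcw : 0 < cw)
    (q : Fin n → ℝ) (hq : ∀ i, 0 ≤ q i) (Ts : ℝ)
    (To : ℝ) (Q : Fin n → ℝ) :
    ∃ Te Tfe Twe : Fin n → ℝ,
      -- `(Te, Tfe, Twe)` is an equilibrium of the dynamics with inputs `q`, `Ts`
      (∀ i,
        (To - Te i) / Ri i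
            + (∑ j ∈ G.neighborFinset i, (Te j - Te i) / Rij i j)
            + (Tfe i - Te i) / Raf i + Q i = 0 ∧
        (Te i - Tfe i) / Raf i + (Twe i - Tfe i) / Rfw i = 0 ∧
        (Tfe i - Twe i) / Rfw i + cw * q i * (Ts - Tfe i) = 0) ∧
      -- the equilibrium is unique
      (∀ Te' Tfe' Twe' : Fin n → ℝ,
        (∀ i,
          (To - Te' i) / Ri i
              + (∑ j ∈ G.neighborFinset i, (Te' j - Te' i) / Rij i j)
              + (Tfe' i - Te' i) / Raf i + Q i = 0 ∧
          (Te' i - Tfe' i) / Raf i + (Twe' i - Tfe' i) / Rfw i = 0 ∧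
          (Tfe' i - Twe' i) / Rfw i + cw * q i * (Ts - Tfe' i) = 0) →
        Te' = Te ∧ Tfe' = Tfe ∧ Twe' = Twe) ∧
      -- every solution of the dynamics converges asymptotically to the equilibrium
      (∀ T Tf Tw : ℝ → Fin n → ℝ,
        (∀ i t, HasDerivAt (fun τ => T τ i)
            (((To - T t i) / Ri i
                + (∑ j ∈ G.neighborFinset i, (T t j - T t i) / Rij i j)
                + (Tf t i - T t i) / Raf i + Q i) / C i) t) →
        (∀ i t, HasDerivAt (fun τ => Tf τ i)
            (((T t i - Tf t i) / Raf i + (Tw t i - Tf t i) / Rfw i) / Cf i) t) →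
        (∀ i t, HasDerivAt (fun τ => Tw τ i)
            (((Tf t i - Tw t i) / Rfw i + cw * q i * (Ts - Tf t i)) / Cw i) t) →
        ∀ i,
          Tendsto (fun t => T t i) atTop (𝓝 (Te i)) ∧
          Tendsto (fun t => Tf t i) atTop (𝓝 (Tfe i)) ∧
          Tendsto (fun t => Tw t i) atTop (𝓝 (Twe i))) := by
  classical
  haveI : Nonempty (Fin n) := ⟨⟨0, hn⟩⟩
  set kk : Fin n → ℝ := fun i => cw * q i with hkk
  have hk : ∀ i, 0 ≤ kk i := fun i => mul_nonneg hcw.le (hq i)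
  have hinj := Lmap_inj G Ri Raf Rfw Rij kk hRi hRaf hRfw hRij hRsym hk
  have hsurj : Function.Surjective (Lmap n G Ri Raf Rfw Rij kk) :=
    LinearMap.injective_iff_surjective.mp hinj
  obtain ⟨s, hs0⟩ := hsurj (fun i => -(To / Ri i + Q i), fun _ => 0, fun i => -(kk i * Ts))
  obtain ⟨Te, Tfe, Twe⟩ := s
  rw [Lmap_apply, Prod.mk.injEq, Prod.mk.injEq] at hs0
  obtain ⟨hs1, hs2, hs3⟩ := hs0
  have hc1 : ∀ i, -(Te i / Ri i) + (∑ j ∈ G.neighborFinset i, (Te j - Te i) / Rij i j)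
      + (Tfe i - Te i) / Raf i = -(To / Ri i + Q i) := fun i => congrFun hs1 i
  have hc2 : ∀ i, (Te i - Tfe i) / Raf i + (Twe i - Tfe i) / Rfw i = 0 := fun i =>
    congrFun hs2 i
  have hc3 : ∀ i, (Tfe i - Twe i) / Rfw i - kk i * Tfe i = -(kk i * Ts) := fun i =>
    congrFun hs3 i
  refine ⟨Te, Tfe, Twe, ?_, ?_, ?_⟩
  · -- equilibrium
    intro i
    refine ⟨by linear_combination hc1 i, by linear_combination hc2 i, ?_⟩
    have h := hc3 i
    simp only [hkk] at h
    linear_combination h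
  · -- uniqueness
    intro Te' Tfe' Twe' h'
    have hLs' : Lmap n G Ri Raf Rfw Rij kk (Te', Tfe', Twe')
        = (fun i => -(To / Ri i + Q i), fun _ => 0, fun i => -(kk i * Ts)) := by
      rw [Lmap_apply]
      refine Prod.ext (funext fun i => ?_) (Prod.ext (funext fun i => ?_) (funext fun i => ?_))
      · linear_combination (h' i).1
      · linear_combination (h' i).2.1
      · have h := (h' i).2.2
        simp only [hkk]
        linear_combination h
    have hLs : Lmap n G Ri Raf Rfw Rij kk (Te, Tfe, Twe)
        = (fun i => -(To / Ri i + Q i), fun _ => 0, fun i => -(kk i * Ts)) := by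
      rw [Lmap_apply]
      exact Prod.ext hs1 (Prod.ext hs2 hs3)
    have heqq := hinj (hLs'.trans hLs.symm)
    exact ⟨congrArg Prod.fst heqq, congrArg (fun p => p.2.1) heqq,
      congrArg (fun p => p.2.2) heqq⟩
  · -- convergence
    intro T Tf Tw hT hTf hTw
    have hlam : ∀ i, 0 < lamz Rfw kk i := lamz_pos Rfw kk hRfw hk
    have heps : ∀ i, 0 < epsz Ri Raf Rfw kk i := epsz_pos Ri Raf Rfw kk hRi hRaf hRfw hk
    -- drift identities at current state, relative to equilibrium
    have hA : ∀ i t, ((To - T t i) / Ri i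
          + (∑ j ∈ G.neighborFinset i, (T t j - T t i) / Rij i j)
          + (Tf t i - T t i) / Raf i + Q i)
        = -((T t i - Te i) / Ri i)
          + (∑ j ∈ G.neighborFinset i, ((T t j - Te j) - (T t i - Te i)) / Rij i j)
          + ((Tf t i - Tfe i) - (T t i - Te i)) / Raf i := by
      intro i t
      have hsplit : ∑ j ∈ G.neighborFinset i, (T t j - T t i) / Rij i j
          = (∑ j ∈ G.neighborFinset i, ((T t j - Te j) - (T t i - Te i)) / Rij i j)
            + ∑ j ∈ G.neighborFinset i, (Te j - Te i) / Rij i j := by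
        rw [← Finset.sum_add_distrib]
        exact Finset.sum_congr rfl fun j _ => by ring
      linear_combination hc1 i + hsplit
    have hB : ∀ i t, ((T t i - Tf t i) / Raf i + (Tw t i - Tf t i) / Rfw i)
        = ((T t i - Te i) - (Tf t i - Tfe i)) / Raf i
          + ((Tw t i - Twe i) - (Tf t i - Tfe i)) / Rfw i := by
      intro i t; linear_combination hc2 i
    have hCC : ∀ i t, ((Tf t i - Tw t i) / Rfw i + cw * q i * (Ts - Tf t i))
        = ((Tf t i - Tfe i) - (Tw t i - Twe i)) / Rfw i - kk i * (Tf t i - Tfe i) := by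
      intro i t
      have h := hc3 i
      simp only [hkk] at h ⊢
      linear_combination h
    set V : ℝ → ℝ := fun t => ∑ i, (C i / 2 * (T t i - Te i) ^ 2
        + Cf i / 2 * (Tf t i - Tfe i) ^ 2
        + lamz Rfw kk i * Cw i / 2 * (Tw t i - Twe i) ^ 2) with hVdef
    set V' : ℝ → ℝ := fun t => ∑ i,
        ((T t i - Te i) * (-((T t i - Te i) / Ri i)
            + (∑ j ∈ G.neighborFinset i, ((T t j - Te j) - (T t i - Te i)) / Rij i j)
            + ((Tf t i - Tfe i) - (T t i - Te i)) / Raf i)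
          + (Tf t i - Tfe i) * (((T t i - Te i) - (Tf t i - Tfe i)) / Raf i
            + ((Tw t i - Twe i) - (Tf t i - Tfe i)) / Rfw i)
          + lamz Rfw kk i * ((Tw t i - Twe i) * (((Tf t i - Tfe i) - (Tw t i - Twe i)) / Rfw i
            - kk i * (Tf t i - Tfe i)))) with hV'def
    have hdV : ∀ t, HasDerivAt V (V' t) t := by
      intro t
      apply HasDerivAt.fun_sum
      intro i _
      have hxd : HasDerivAt (fun τ => T τ i - Te i)
          (((To - T t i) / Ri i + (∑ j ∈ G.neighborFinset i, (T t j - T t i) / Rij i j)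
            + (Tf t i - T t i) / Raf i + Q i) / C i) t := (hT i t).sub_const _
      have hfd : HasDerivAt (fun τ => Tf τ i - Tfe i)
          (((T t i - Tf t i) / Raf i + (Tw t i - Tf t i) / Rfw i) / Cf i) t :=
        (hTf i t).sub_const _
      have hwd : HasDerivAt (fun τ => Tw τ i - Twe i)
          (((Tf t i - Tw t i) / Rfw i + cw * q i * (Ts - Tf t i)) / Cw i) t :=
        (hTw i t).sub_const _
      have h1 := (hxd.pow 2).const_mul (C i / 2)
      have h2 := (hfd.pow 2).const_mul (Cf i / 2)
      have h3 := (hwd.pow 2).const_mul (lamz Rfw kk i * Cw i / 2)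
      refine ((h1.add h2).add h3).congr_deriv ?_
      rw [hA i t, hB i t, hCC i t]
      have hC0 := (hC i).ne'
      have hCf0 := (hCf i).ne'
      have hCw0 := (hCw i).ne'
      field_simp
      ring
    have hρpos : 0 < ρconv n C Cf Cw Ri Raf Rfw kk := by
      rw [ρconv, Finset.lt_inf'_iff]
      intro i _
      have e1 := heps i; have e2 := hC i; have e3 := hCf i; have e4 := hCw i
      have e5 := hlam i
      exact lt_min (by positivity) (lt_min (by positivity) (by positivity))
    set ρ : ℝ := ρconv n C Cf Cw Ri Raf Rfw kk with hρdef
    have hVle : ∀ t, V' t ≤ -ρ * V t := by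
      intro t
      have h1 := keyIneq G Ri Raf Rfw Rij kk hRi hRaf hRfw hRij hRsym hk
        (fun i => T t i - Te i) (fun i => Tf t i - Tfe i) (fun i => Tw t i - Twe i)
      have h2 : ∑ i, -(epsz Ri Raf Rfw kk i) * ((T t i - Te i) ^ 2 + (Tf t i - Tfe i) ^ 2
            + (Tw t i - Twe i) ^ 2) ≤ -ρ * V t := by
        rw [hVdef]
        simp only
        rw [neg_mul, Finset.mul_sum, ← Finset.sum_neg_distrib]
        refine Finset.sum_le_sum fun i _ => ?_
        have hle : ρ ≤ min (2 * epsz Ri Raf Rfw kk i / C i)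
            (min (2 * epsz Ri Raf Rfw kk i / Cf i)
              (2 * epsz Ri Raf Rfw kk i / (lamz Rfw kk i * Cw i))) := by
          rw [hρdef, ρconv]
          exact Finset.inf'_le _ (Finset.mem_univ i)
        have k1 : ρ * C i ≤ 2 * epsz Ri Raf Rfw kk i :=
          (le_div_iff₀ (hC i)).mp (hle.trans (min_le_left _ _))
        have k2 : ρ * Cf i ≤ 2 * epsz Ri Raf Rfw kk i :=
          (le_div_iff₀ (hCf i)).mp (hle.trans ((min_le_right _ _).trans (min_le_left _ _)))
        have k3 : ρ * (lamz Rfw kk i * Cw i) ≤ 2 * epsz Ri Raf Rfw kk i :=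
          (le_div_iff₀ (mul_pos (hlam i) (hCw i))).mp
            (hle.trans ((min_le_right _ _).trans (min_le_right _ _)))
        nlinarith [mul_le_mul_of_nonneg_right k1 (sq_nonneg (T t i - Te i)),
          mul_le_mul_of_nonneg_right k2 (sq_nonneg (Tf t i - Tfe i)),
          mul_le_mul_of_nonneg_right k3 (sq_nonneg (Tw t i - Twe i))]
      calc V' t = ∑ i, ((T t i - Te i) * (-((T t i - Te i) / Ri i)
            + (∑ j ∈ G.neighborFinset i, ((T t j - Te j) - (T t i - Te i)) / Rij i j)
            + ((Tf t i - Tfe i) - (T t i - Te i)) / Raf i)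
          + (Tf t i - Tfe i) * (((T t i - Te i) - (Tf t i - Tfe i)) / Raf i
            + ((Tw t i - Twe i) - (Tf t i - Tfe i)) / Rfw i)
          + lamz Rfw kk i * ((Tw t i - Twe i) * (((Tf t i - Tfe i) - (Tw t i - Twe i)) / Rfw i
            - kk i * (Tf t i - Tfe i)))) := rfl
        _ ≤ ∑ i, -(epsz Ri Raf Rfw kk i) * ((T t i - Te i) ^ 2 + (Tf t i - Tfe i) ^ 2
            + (Tw t i - Twe i) ^ 2) := h1
        _ ≤ -ρ * V t := h2
    have hV0 : ∀ t, 0 ≤ V t := by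
      intro t
      rw [hVdef]
      refine Finset.sum_nonneg fun i _ => ?_
      have e2 := hC i; have e3 := hCf i; have e4 := hCw i; have e5 := hlam i
      positivity
    have htend : Tendsto V atTop (𝓝 0) :=
      gronwall_tendsto_zero V V' ρ hρpos hV0 hdV hVle
    -- per-coordinate convergence
    have coord : ∀ (g : ℝ → ℝ) (c : ℝ), 0 < c → (∀ t, c / 2 * (g t) ^ 2 ≤ V t) →
        Tendsto g atTop (𝓝 0) := by
      intro g c hcpos hb
      have hsq : Tendsto (fun t => (g t) ^ 2) atTop (𝓝 0) := by
        have hup : Tendsto (fun t => 2 / c * V t) atTop (𝓝 0) := by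
          simpa using htend.const_mul (2 / c)
        refine tendsto_of_tendsto_of_tendsto_of_le_of_le tendsto_const_nhds hup
          (fun t => sq_nonneg _) (fun t => ?_)
        calc (g t) ^ 2 = 2 / c * (c / 2 * (g t) ^ 2) := by field_simp
          _ ≤ 2 / c * V t := mul_le_mul_of_nonneg_left (hb t) (by positivity)
      have habs : Tendsto (fun t => |g t|) atTop (𝓝 0) := by
        have h5 := hsq.sqrt
        simpa [Real.sqrt_sq_eq_abs] using h5
      exact tendsto_of_tendsto_of_tendsto_of_le_of_le (by simpa using habs.neg) habs
        (fun t => neg_abs_le _) (fun t => le_abs_self _)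
    intro i
    have hsummand : ∀ t, C i / 2 * (T t i - Te i) ^ 2
        + Cf i / 2 * (Tf t i - Tfe i) ^ 2
        + lamz Rfw kk i * Cw i / 2 * (Tw t i - Twe i) ^ 2 ≤ V t := by
      intro t
      rw [hVdef]
      simp only
      refine Finset.single_le_sum (f := fun j => C j / 2 * (T t j - Te j) ^ 2
          + Cf j / 2 * (Tf t j - Tfe j) ^ 2 + lamz Rfw kk j * Cw j / 2 * (Tw t j - Twe j) ^ 2)
        (fun j _ => ?_) (Finset.mem_univ i)
      have e2 := hC j; have e3 := hCf j; have e4 := hCw j; have e5 := hlam j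
      positivity
    have p1 : 0 < C i := hC i
    have p2 : 0 < Cf i := hCf i
    have p3 : 0 < lamz Rfw kk i * Cw i := by have := hlam i; have := hCw i; positivity
    have q1 : ∀ t, C i / 2 * (T t i - Te i) ^ 2 ≤ V t := fun t => by
      have h := hsummand t
      nlinarith [sq_nonneg (Tf t i - Tfe i), sq_nonneg (Tw t i - Twe i)]
    have q2 : ∀ t, Cf i / 2 * (Tf t i - Tfe i) ^ 2 ≤ V t := fun t => by
      have h := hsummand t
      nlinarith [sq_nonneg (T t i - Te i), sq_nonneg (Tw t i - Twe i)]
    have q3 : ∀ t, lamz Rfw kk i * Cw i / 2 * (Tw t i - Twe i) ^ 2 ≤ V t := fun t => by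
      have h := hsummand t
      nlinarith [sq_nonneg (T t i - Te i), sq_nonneg (Tf t i - Tfe i)]
    have c1 := coord (fun t => T t i - Te i) (C i) p1 q1
    have c2 := coord (fun t => Tf t i - Tfe i) (Cf i) p2 q2
    have c3 := coord (fun t => Tw t i - Twe i) (lamz Rfw kk i * Cw i) p3 q3
    refine ⟨?_, ?_, ?_⟩
    · have := c1.add_const (Te i); simpa using this
    · have := c2.add_const (Tfe i); simpa using this
    · have := c3.add_const (Twe i); simpa using this
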